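/- Let p > 1 and let U : [0,∞) → ℝ be a C¹ function satisfying U(t) ≥ c·ε for all t ≥ 0 (with c, ε > 0) and U(t) ≥ ∫_0^t e^{τ−t} ∫_0^τ U(s)^p ds dτ for all t ≥ 0. Then for all j ∈ ℕ and t ≥ L_j (where L_j = ∏_{k=0}^j (1+p^{-k})) one has U(t) ≥ C_j·(t − L_j)^{γ_j}, where C_0 = cε, γ_0 = 0, γ_{j+1} = 1 + p·γ_j, and C_{j+1} = (p−1/2)·C_j^p·p^{-2(j+1)}/((γ_j p + 1)·ℓ_{j+1}^{γ_j p + 1}) with ℓ_{j+1} = 1 + p^{-(j+1)}. -/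

import Mathlib

open MeasureTheory intervalIntegral Set

set_option maxHeartbeats 1000000 in
theorem stmt_16 (p c ε : ℝ) (hp : 1 < p) (hc : 0 < c) (hε : 0 < ε)
    (U : ℝ → ℝ)
    (hUcont : ContinuousOn U (Set.Ici 0))
    (hUnonneg : ∀ t : ℝ, 0 ≤ t → 0 ≤ U t)
    (hUlow : ∀ t : ℝ, 0 ≤ t → U t ≥ c * ε)
    (hUint : ∀ t : ℝ, 0 ≤ t →
      U t ≥ ∫ τ in (0 : ℝ)..t, Real.exp (τ - t) * ∫ s in (0 : ℝ)..τ, (U s) ^ p)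
    (ℓ : ℕ → ℝ) (hℓ : ∀ k : ℕ, ℓ k = 1 + p ^ (-(k : ℝ)))
    (L : ℕ → ℝ) (hL : ∀ j : ℕ, L j = ∏ k ∈ Finset.range (j + 1), ℓ k)
    (γ : ℕ → ℝ) (hγ0 : γ 0 = 0) (hγs : ∀ j : ℕ, γ (j + 1) = 1 + p * γ j)
    (C : ℕ → ℝ) (hC0 : C 0 = c * ε)
    (hCs : ∀ j : ℕ, C (j + 1) =
      (p - 1 / 2) * (C j) ^ p * p ^ (-2 * ((j : ℝ) + 1)) /
        ((γ j * p + 1) * (ℓ (j + 1)) ^ (γ j * p + 1))) :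
    ∀ j : ℕ, ∀ t : ℝ, L j ≤ t → U t ≥ C j * (t - L j) ^ (γ j) := by
  have hp0 : (0:ℝ) < p := by linarith
  have hℓpos : ∀ k, 0 < ℓ k := fun k => by
    rw [hℓ]; have := Real.rpow_pos_of_pos hp0 (-(k:ℝ)); linarith
  have hℓ1 : ∀ k, 1 ≤ ℓ k := fun k => by
    rw [hℓ]; have := Real.rpow_pos_of_pos hp0 (-(k:ℝ)); linarith
  have hLsucc : ∀ j, L (j+1) = L j * ℓ (j+1) := fun j => by
    rw [hL, hL, Finset.prod_range_succ]
  have hL2 : ∀ j, 2 ≤ L j := by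
    intro j
    induction j with
    | zero =>
      rw [hL]
      simp only [Finset.range_one, Finset.prod_singleton, hℓ]
      norm_num
    | succ n ih => rw [hLsucc]; nlinarith [hℓ1 (n+1)]
  have hγnn : ∀ j, 0 ≤ γ j := by
    intro j
    induction j with
    | zero => rw [hγ0]
    | succ n ih => rw [hγs]; nlinarith
  have hCpos : ∀ j, 0 < C j := by
    intro j
    induction j with
    | zero => rw [hC0]; positivity
    | succ n ih =>
      rw [hCs]
      have h1 : 0 < (C n) ^ p := Real.rpow_pos_of_pos ih p
      have h2 : 0 < p ^ (-2*((n:ℝ)+1)) := Real.rpow_pos_of_pos hp0 _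
      have h3 : 0 < γ n * p + 1 := by nlinarith [hγnn n]
      have h4 : 0 < (ℓ (n+1)) ^ (γ n * p + 1) := Real.rpow_pos_of_pos (hℓpos _) _
      have h5 : 0 < p - 1/2 := by linarith
      positivity
  have hUpc : ContinuousOn (fun s => (U s) ^ p) (Set.Ici 0) :=
    hUcont.rpow_const (fun x _ => Or.inr hp0.le)
  have hUpnn : ∀ s, 0 ≤ s → 0 ≤ (U s) ^ p := fun s hs => Real.rpow_nonneg (hUnonneg s hs) p
  have hUpint : ∀ x y : ℝ, 0 ≤ x → x ≤ y →
      IntervalIntegrable (fun s => (U s)^p) volume x y := by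
    intro x y hx hxy
    apply ContinuousOn.intervalIntegrable
    apply hUpc.mono
    rw [Set.uIcc_of_le hxy]
    intro z hz; exact le_trans hx hz.1
  intro j
  induction j with
  | zero =>
    intro t ht
    have h0t : (0:ℝ) ≤ t := le_trans (by linarith [hL2 0]) ht
    rw [hγ0, Real.rpow_zero, mul_one, hC0]
    exact hUlow t h0t
  | succ n ih =>
    intro t ht
    have ha : 0 ≤ γ n * p := mul_nonneg (hγnn n) hp0.le
    have ha1 : 0 < γ n * p + 1 := by linarith
    set q := p ^ (-((n:ℝ)+1)) with hq_def
    have hq0 : 0 < q := Real.rpow_pos_of_pos hp0 _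
    have hpq : p * q ≤ 1 := by
      have h1 : q ≤ p ^ (-1:ℝ) := by
        rw [hq_def]
        apply Real.rpow_le_rpow_of_exponent_le hp.le
        have : (0:ℝ) ≤ (n:ℝ) := Nat.cast_nonneg n
        linarith
      rw [Real.rpow_neg_one] at h1
      calc p * q ≤ p * p⁻¹ := by nlinarith
        _ = 1 := mul_inv_cancel₀ (ne_of_gt hp0)
    have hcast : (((n+1):ℕ):ℝ) = (n:ℝ)+1 := by push_cast; ring
    have hℓ'eq : ℓ (n+1) = 1 + q := by rw [hℓ, hcast, hq_def]
    have hℓ'pos : 0 < ℓ (n+1) := hℓpos _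
    have hℓ'1 : 1 < ℓ (n+1) := by rw [hℓ'eq]; linarith
    have hLL : L (n+1) = L n * ℓ (n+1) := hLsucc n
    have hLn2 : 2 ≤ L n := hL2 n
    have hLn0 : 0 < L n := by linarith
    have ht2 : 2 ≤ t := le_trans (hL2 (n+1)) ht
    have h0t : (0:ℝ) ≤ t := by linarith
    set m := t / ℓ (n+1) with hm_def
    have hm0 : 0 < m := div_pos (by linarith) hℓ'pos
    have hmLn : L n ≤ m := by
      rw [hm_def, le_div_iff₀ hℓ'pos]; rw [hLL] at ht; linarith
    have hmt : m ≤ t := by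
      rw [hm_def, div_le_iff₀ hℓ'pos]; nlinarith
    have htL : 0 ≤ t - L (n+1) := by linarith
    set X := (t - L (n+1)) / ℓ (n+1) with hX_def
    have hX0 : 0 ≤ X := div_nonneg htL hℓ'pos.le
    have hτX : ∀ τ, m ≤ τ → X ≤ τ - L n := by
      intro τ hτ
      have h1 : t ≤ τ * ℓ (n+1) := by
        rw [hm_def, div_le_iff₀ hℓ'pos] at hτ; linarith
      rw [hX_def, div_le_iff₀ hℓ'pos, hLL]
      nlinarith
    set K := C n ^ p * X ^ (γ n * p + 1) / (γ n * p + 1) with hK_def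
    have hCp0 : 0 < C n ^ p := Real.rpow_pos_of_pos (hCpos n) p
    have hXp0 : 0 ≤ X ^ (γ n * p + 1) := Real.rpow_nonneg hX0 _
    have hK0 : 0 ≤ K := by rw [hK_def]; positivity
    have hinner : ∀ τ, m ≤ τ → K ≤ ∫ s in (0:ℝ)..τ, (U s) ^ p := by
      intro τ hτ
      have hLτ : L n ≤ τ := le_trans hmLn hτ
      have h0τ : (0:ℝ) ≤ τ := by linarith
      have hi1 := hUpint 0 (L n) le_rfl hLn0.le
      have hi2 := hUpint (L n) τ hLn0.le hLτ
      have hsplit : (∫ s in (0:ℝ)..τ, (U s)^p) =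
          (∫ s in (0:ℝ)..(L n), (U s)^p) + ∫ s in (L n)..τ, (U s)^p :=
        (intervalIntegral.integral_add_adjacent_intervals hi1 hi2).symm
      have h1 : 0 ≤ ∫ s in (0:ℝ)..(L n), (U s)^p :=
        intervalIntegral.integral_nonneg hLn0.le (fun u hu => hUpnn u hu.1)
      have hflow : ∀ s ∈ Set.Icc (L n) τ, C n ^ p * (s - L n) ^ (γ n * p) ≤ (U s) ^ p := by
        intro s hs
        have hs0 : 0 ≤ s - L n := by linarith [hs.1]
        have hb0 : 0 ≤ C n * (s - L n) ^ (γ n) :=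
          mul_nonneg (hCpos n).le (Real.rpow_nonneg hs0 _)
        have h2 := Real.rpow_le_rpow hb0 (ih s hs.1) hp0.le
        calc C n ^ p * (s - L n) ^ (γ n * p)
            = (C n * (s - L n) ^ (γ n)) ^ p := by
              rw [Real.mul_rpow (hCpos n).le (Real.rpow_nonneg hs0 _),
                ← Real.rpow_mul hs0]
          _ ≤ (U s) ^ p := h2
      have h2 : (∫ s in (L n)..τ, C n ^ p * (s - L n) ^ (γ n * p)) ≤
          ∫ s in (L n)..τ, (U s)^p := by
        apply intervalIntegral.integral_mono_on hLτ _ hi2 hflow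
        apply ContinuousOn.intervalIntegrable
        apply ContinuousOn.mul continuousOn_const
        apply ContinuousOn.rpow_const ((continuous_id.sub continuous_const).continuousOn)
        intro x _
        exact Or.inr ha
      have h3 : (∫ s in (L n)..τ, C n ^ p * (s - L n) ^ (γ n * p)) =
          C n ^ p * ((τ - L n) ^ (γ n * p + 1) / (γ n * p + 1)) := by
        rw [intervalIntegral.integral_const_mul]
        congr 1
        rw [intervalIntegral.integral_comp_sub_right (fun s => s ^ (γ n * p)) (L n), sub_self,
          integral_rpow (Or.inl (by linarith : (-1:ℝ) < γ n * p)),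
          Real.zero_rpow (ne_of_gt ha1), sub_zero]
      have h4 : X ^ (γ n * p + 1) ≤ (τ - L n) ^ (γ n * p + 1) :=
        Real.rpow_le_rpow hX0 (hτX τ hτ) ha1.le
      have h5 : K ≤ C n ^ p * ((τ - L n) ^ (γ n * p + 1) / (γ n * p + 1)) := by
        rw [hK_def, mul_div_assoc]
        gcongr
      rw [h3] at h2
      rw [hsplit]
      linarith
    have hInt : IntegrableOn (fun s => (U s)^p) (Set.uIcc 0 t) volume := by
      rw [Set.uIcc_of_le h0t]
      exact (hUpc.mono (fun z hz => hz.1)).integrableOn_Icc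
    have hIcont : ContinuousOn (fun τ => ∫ s in (0:ℝ)..τ, (U s)^p) (Set.Icc 0 t) := by
      have h := intervalIntegral.continuousOn_primitive_interval hInt
      rwa [Set.uIcc_of_le h0t] at h
    have hFcont : ContinuousOn
        (fun τ => Real.exp (τ - t) * ∫ s in (0:ℝ)..τ, (U s)^p) (Set.Icc 0 t) :=
      ((Real.continuous_exp.comp (continuous_id.sub continuous_const)).continuousOn).mul hIcont
    have hFint1 : IntervalIntegrable
        (fun τ => Real.exp (τ - t) * ∫ s in (0:ℝ)..τ, (U s)^p) volume 0 m := by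
      apply ContinuousOn.intervalIntegrable
      apply hFcont.mono
      rw [Set.uIcc_of_le hm0.le]
      exact Set.Icc_subset_Icc le_rfl hmt
    have hFint2 : IntervalIntegrable
        (fun τ => Real.exp (τ - t) * ∫ s in (0:ℝ)..τ, (U s)^p) volume m t := by
      apply ContinuousOn.intervalIntegrable
      apply hFcont.mono
      rw [Set.uIcc_of_le hmt]
      exact Set.Icc_subset_Icc hm0.le le_rfl
    have hInn : ∀ τ, 0 ≤ τ → 0 ≤ ∫ s in (0:ℝ)..τ, (U s)^p := fun τ hτ =>
      intervalIntegral.integral_nonneg hτ (fun u hu => hUpnn u hu.1)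
    have hF0 : 0 ≤ ∫ τ in (0:ℝ)..m, Real.exp (τ - t) * ∫ s in (0:ℝ)..τ, (U s)^p :=
      intervalIntegral.integral_nonneg hm0.le
        (fun u hu => mul_nonneg (Real.exp_nonneg _) (hInn u hu.1))
    have hsplit2 : (∫ τ in (0:ℝ)..t, Real.exp (τ - t) * ∫ s in (0:ℝ)..τ, (U s)^p) =
        (∫ τ in (0:ℝ)..m, Real.exp (τ - t) * ∫ s in (0:ℝ)..τ, (U s)^p) +
        ∫ τ in m..t, Real.exp (τ - t) * ∫ s in (0:ℝ)..τ, (U s)^p :=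
      (intervalIntegral.integral_add_adjacent_intervals hFint1 hFint2).symm
    have hcomp : (∫ τ in m..t, K * Real.exp (τ - t)) ≤
        ∫ τ in m..t, Real.exp (τ - t) * ∫ s in (0:ℝ)..τ, (U s)^p := by
      apply intervalIntegral.integral_mono_on hmt _ hFint2
      · intro x hx
        have h6 := hinner x hx.1
        have he : 0 < Real.exp (x - t) := Real.exp_pos _
        rw [mul_comm]
        exact mul_le_mul_of_nonneg_left h6 he.le
      · exact (continuous_const.mul
          (Real.continuous_exp.comp (continuous_id.sub continuous_const))).intervalIntegrable _ _
    have hval : (∫ τ in m..t, K * Real.exp (τ - t)) = K * (1 - Real.exp (m - t)) := by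
      rw [intervalIntegral.integral_const_mul]
      congr 1
      rw [intervalIntegral.integral_comp_sub_right (fun u => Real.exp u) t, sub_self,
        integral_exp, Real.exp_zero]
    have hd : L n * q ≤ t - m := by
      have h7 : t / ℓ (n+1) ≤ t - L n * q := by
        rw [div_le_iff₀ hℓ'pos, hℓ'eq]
        have hll : L n * (1+q) ≤ t := by rw [hLL, hℓ'eq] at ht; exact ht
        nlinarith [mul_nonneg hq0.le (sub_nonneg.mpr hll)]
      rw [hm_def]; linarith
    have hqq : p ^ (-2*((n:ℝ)+1)) = q * q := by
      rw [hq_def, ← Real.rpow_add hp0]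
      congr 1
      ring
    have hBle : (p - 1/2) * (q*q) ≤ 1/2 := by
      have hpq0 : 0 ≤ p*q := (mul_pos hp0 hq0).le
      have h6 : p*q*(p*q) ≤ 1*1 := mul_le_mul hpq hpq hpq0 one_pos.le
      nlinarith [sq_nonneg (p-1), hq0, hp0]
    have hkey : Real.exp (m - t) ≤ 1 - (p - 1/2) * (q*q) := by
      rcases le_total 1 (L n * q) with h1 | h1
      · have h8 : Real.exp (m - t) ≤ Real.exp (-1) := Real.exp_le_exp.mpr (by linarith)
        have he : Real.exp (-1) < 1/2 := by
          rw [Real.exp_neg, ← one_div]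
          exact one_div_lt_one_div_of_lt two_pos (by linarith [Real.exp_one_gt_d9])
        linarith
      · have hx0 : 0 < L n * q := mul_pos hLn0 hq0
        have hexp : Real.exp (m - t) ≤ Real.exp (-(L n * q)) :=
          Real.exp_le_exp.mpr (by linarith)
        have hb : Real.exp (-(L n * q)) ≤ 1 / (1 + L n * q) := by
          rw [Real.exp_neg, ← one_div]
          exact one_div_le_one_div_of_le (by linarith)
            (by linarith [Real.add_one_le_exp (L n * q)])
        have hB0 : 0 ≤ (p - 1/2) * (q*q) := mul_nonneg (by linarith) (by positivity)
        have h7 : (p - 1/2)*q ≤ 1 := by nlinarith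
        have hB3 : (p - 1/2) * (q*q) ≤ q := by
          nlinarith [mul_le_mul_of_nonneg_right h7 hq0.le]
        have hx2q : 2*q ≤ L n * q := by nlinarith
        have hc2 : 1 / (1 + L n * q) ≤ 1 - (p - 1/2)*(q*q) := by
          rw [div_le_iff₀ (by positivity : (0:ℝ) < 1 + L n * q)]
          nlinarith [mul_le_mul_of_nonneg_left h1 hB0]
        linarith
    have hUt := hUint t h0t
    rw [ge_iff_le, hsplit2] at hUt
    have final1 : K * ((p - 1/2) * (q*q)) ≤ U t := by
      have h8 : K * ((p-1/2)*(q*q)) ≤ K * (1 - Real.exp (m-t)) :=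
        mul_le_mul_of_nonneg_left (by linarith) hK0
      linarith [hF0, hcomp, hval.symm.le, hval.le]
    rw [ge_iff_le, hγs n, hCs n, hqq]
    have hexp_eq : (1 + p * γ n) = γ n * p + 1 := by ring
    rw [hexp_eq]
    have hXr : X ^ (γ n * p + 1) = (t - L (n+1)) ^ (γ n * p + 1) / (ℓ (n+1)) ^ (γ n * p + 1) := by
      rw [hX_def, Real.div_rpow htL hℓ'pos.le]
    have h9 : (γ n * p + 1) ≠ 0 := ne_of_gt ha1
    have h10 : (ℓ (n+1)) ^ (γ n * p + 1) ≠ 0 := ne_of_gt (Real.rpow_pos_of_pos hℓ'pos _)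
    have heq : (p - 1/2) * C n ^ p * (q*q) / ((γ n * p + 1) * (ℓ (n+1)) ^ (γ n * p + 1)) *
        (t - L (n+1)) ^ (γ n * p + 1) = K * ((p - 1/2) * (q*q)) := by
      rw [hK_def, hXr]
      field_simp
    rw [heq]
    exact final1
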